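/- The formulas D_{p,q}(x^α t^i).v_{β,j} = (α_p(β_q+μ_q) − α_q(β_p+μ_p)) v_{β+α, i+j} + (j_q α_p − i_q(β_p+μ_p)) v_{β+α, i+j−1_[q]} + (i_p(β_q+μ_q) − j_p α_q) v_{β+α, i+j−1_[p]} + (i_p j_q − i_q j_p) v_{β+α, i+j−1_[p]−1_[q]} define a module structure A_μ over the Lie algebra S(l₁,l₂,l₃;0,Γ) on the vector space with basis {v_{α,i} : α ∈ Γ, i ∈ ℕ^{l₁+l₂}}, i.e., the bracket relation [X,Y].v = X.(Y.v) − Y.(X.v) holds for all X, Y ∈ S(l₁,l₂,l₃;0,Γ). -/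

import Mathlib

open scoped BigOperators

namespace SDF

variable (F : Type) [Field F] [IsAlgClosed F] [CharZero F]
variable (l₁ l₂ l₃ : ℕ) (Γ : AddSubgroup (Fin (l₂ + l₃) → F))

/-- The semigroup algebra `A(l₁,l₂,l₃;Γ) = F[Γ × ℕ^{l₁+l₂}]`,
with basis `x^α t^i` for `α ∈ Γ`, `i ∈ ℕ^{l₁+l₂}`. -/
abbrev Alg : Type := AddMonoidAlgebra F (↥Γ × (Fin (l₁ + l₂) →₀ ℕ))

/-- The basis monomial `x^α t^i`. -/
noncomputable def mono (α : Γ) (i : Fin (l₁ + l₂) →₀ ℕ) : Alg F l₁ l₂ l₃ Γ :=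
  AddMonoidAlgebra.single (α, i) 1

/-- The `p`-th coordinate of `α ∈ Γ ⊆ F^{l₂+l₃}`, with the convention `α_p = 0` for `p ≤ l₁`. -/
def acoord (p : Fin (l₁ + l₂ + l₃)) (α : Γ) : F :=
  if h : l₁ ≤ (p : ℕ) then (α : Fin (l₂ + l₃) → F) ⟨(p : ℕ) - l₁, by have := p.isLt; omega⟩
  else 0

/-- The `p`-th coordinate of a general `μ ∈ F^{l₂+l₃}`, with the convention `μ_p = 0` for `p ≤ l₁`. -/
def fcoord (p : Fin (l₁ + l₂ + l₃)) (μ : Fin (l₂ + l₃) → F) : F :=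
  if h : l₁ ≤ (p : ℕ) then μ ⟨(p : ℕ) - l₁, by have := p.isLt; omega⟩ else 0

/-- The `p`-th component of `i ∈ ℕ^{l₁+l₂}`, with the convention `i_p = 0` for `p > l₁+l₂`. -/
def icoord (p : Fin (l₁ + l₂ + l₃)) (i : Fin (l₁ + l₂) →₀ ℕ) : ℕ :=
  if h : (p : ℕ) < l₁ + l₂ then i ⟨(p : ℕ), h⟩ else 0

/-- `i - 1_[p]` (truncated subtraction; only used with coefficient `i_p`). -/
noncomputable def lower (p : Fin (l₁ + l₂ + l₃)) (i : Fin (l₁ + l₂) →₀ ℕ) : Fin (l₁ + l₂) →₀ ℕ :=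
  if h : (p : ℕ) < l₁ + l₂ then i - Finsupp.single ⟨(p : ℕ), h⟩ 1 else i

/-- The derivation `∂_p` of `A(l₁,l₂,l₃;Γ)`:
`∂_p(x^α t^i) = α_p x^α t^i + i_p x^α t^{i - 1_[p]}`. -/
noncomputable def pd (p : Fin (l₁ + l₂ + l₃)) :
    Alg F l₁ l₂ l₃ Γ →ₗ[F] Alg F l₁ l₂ l₃ Γ :=
  (Finsupp.lsum F fun g : ↥Γ × (Fin (l₁ + l₂) →₀ ℕ) =>
    LinearMap.toSpanSingleton F (Alg F l₁ l₂ l₃ Γ)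
      (acoord F l₁ l₂ l₃ Γ p g.1 • mono F l₁ l₂ l₃ Γ g.1 g.2
        + (icoord l₁ l₂ l₃ p g.2 : F) • mono F l₁ l₂ l₃ Γ g.1 (lower l₁ l₂ l₃ p g.2)))
    ∘ₗ (AddMonoidAlgebra.coeffLinearEquiv F).toLinearMap

/-- The Witt algebra `W(l₁,l₂,l₃;Γ) = A·D`; the tuple `u : Wt` represents `Σ_p u_p ∂_p`. -/
abbrev Wt : Type := Fin (l₁ + l₂ + l₃) → Alg F l₁ l₂ l₃ Γ

/-- The Lie bracket of `W(l₁,l₂,l₃;Γ)`: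
`[Σ_p u_p ∂_p, Σ_q v_q ∂_q] = Σ_{p,q} (u_p ∂_p(v_q) - v_p ∂_p(u_q)) ∂_q`. -/
noncomputable def wbr (u v : Wt F l₁ l₂ l₃ Γ) : Wt F l₁ l₂ l₃ Γ :=
  fun r => ∑ p, (u p * pd F l₁ l₂ l₃ Γ p (v r) - v p * pd F l₁ l₂ l₃ Γ p (u r))

/-- `D_{p,q}(u) = ∂_p(u) ∂_q - ∂_q(u) ∂_p`. -/
noncomputable def Dpq (p q : Fin (l₁ + l₂ + l₃)) (u : Alg F l₁ l₂ l₃ Γ) :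
    Wt F l₁ l₂ l₃ Γ :=
  Pi.single q (pd F l₁ l₂ l₃ Γ p u) - Pi.single p (pd F l₁ l₂ l₃ Γ q u)

/-- The divergence-free algebra `S(l₁,l₂,l₃;0,Γ) = Span{D_{p,q}(u)}`. -/
noncomputable def Ssub : Submodule F (Wt F l₁ l₂ l₃ Γ) :=
  Submodule.span F {w | ∃ p q u, w = Dpq F l₁ l₂ l₃ Γ p q u}

/-- `Γ` is nondegenerate: it contains an `F`-basis of `F^{l₂+l₃}`, i.e. it spans. -/
def Nondeg : Prop := Submodule.span F (Γ : Set (Fin (l₂ + l₃) → F)) = ⊤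

/-- The divergence `div(Σ_p u_p ∂_p) = Σ_p ∂_p(u_p)`. -/
noncomputable def dvg (w : Wt F l₁ l₂ l₃ Γ) : Alg F l₁ l₂ l₃ Γ :=
  ∑ p, pd F l₁ l₂ l₃ Γ p (w p)

/-- The action of `Σ_p u_p ∂_p ∈ W` on `A_μ` (the space `A` with basis `v_{β,i}` the monomials):
`(u ∂_p) . v = u * (∂_p + μ_p) v`. On basis elements this gives exactly the defining formulas
of the module `A_μ`. -/
noncomputable def actW (μ : Fin (l₂ + l₃) → F) (X : Wt F l₁ l₂ l₃ Γ) :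
    Alg F l₁ l₂ l₃ Γ →ₗ[F] Alg F l₁ l₂ l₃ Γ :=
  ∑ p, (LinearMap.mulLeft F (X p)).comp
    (pd F l₁ l₂ l₃ Γ p + fcoord F l₁ l₂ l₃ p μ • LinearMap.id)

/-- The element `Σ_p a_p ∂_p` of `D ⊆ W`. -/
noncomputable def wD (a : Fin (l₁ + l₂ + l₃) → F) : Wt F l₁ l₂ l₃ Γ :=
  fun p => algebraMap F (Alg F l₁ l₂ l₃ Γ) (a p)

/-- The element `∂_p ∈ W`. -/
noncomputable def wdelta (p : Fin (l₁ + l₂ + l₃)) : Wt F l₁ l₂ l₃ Γ :=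
  Pi.single p 1

/-- `β(∂) = Σ_{p>l₁} a_p β_p` for `∂ = Σ_p a_p ∂_p`. -/
def beval (β : Fin (l₂ + l₃) → F) (a : Fin (l₁ + l₂ + l₃) → F) : F :=
  ∑ p, a p * fcoord F l₁ l₂ l₃ p β


set_option linter.unusedSectionVars false
variable {F} {l₁ l₂ l₃} {Γ}

lemma mono_mul (α β : Γ) (i j : Fin (l₁ + l₂) →₀ ℕ) :
    mono F l₁ l₂ l₃ Γ α i * mono F l₁ l₂ l₃ Γ β j = mono F l₁ l₂ l₃ Γ (α + β) (i + j) := by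
  simp [mono, AddMonoidAlgebra.single_mul_single]

lemma pd_mono (p : Fin (l₁ + l₂ + l₃)) (α : Γ) (i : Fin (l₁ + l₂) →₀ ℕ) :
    pd F l₁ l₂ l₃ Γ p (mono F l₁ l₂ l₃ Γ α i) =
      acoord F l₁ l₂ l₃ Γ p α • mono F l₁ l₂ l₃ Γ α i
        + (icoord l₁ l₂ l₃ p i : F) • mono F l₁ l₂ l₃ Γ α (lower l₁ l₂ l₃ p i) := by
  unfold pd mono
  rw [LinearMap.comp_apply]
  rw [LinearEquiv.coe_coe, show (AddMonoidAlgebra.coeffLinearEquiv F)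
    (AddMonoidAlgebra.single (α, i) (1 : F) : Alg F l₁ l₂ l₃ Γ) = Finsupp.single (α, i) 1 from rfl]
  erw [Finsupp.lsum_single]
  simp [LinearMap.toSpanSingleton_apply, mono]

lemma acoord_add (p : Fin (l₁ + l₂ + l₃)) (α β : Γ) :
    acoord F l₁ l₂ l₃ Γ p (α + β) = acoord F l₁ l₂ l₃ Γ p α + acoord F l₁ l₂ l₃ Γ p β := by
  unfold acoord; split <;> simp

lemma icoord_add (p : Fin (l₁ + l₂ + l₃)) (i j : Fin (l₁ + l₂) →₀ ℕ) :
    icoord l₁ l₂ l₃ p (i + j) = icoord l₁ l₂ l₃ p i + icoord l₁ l₂ l₃ p j := by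
  unfold icoord; split <;> simp

lemma lower_add_of_ne (p : Fin (l₁ + l₂ + l₃)) (i j : Fin (l₁ + l₂) →₀ ℕ)
    (h : icoord l₁ l₂ l₃ p i ≠ 0) :
    lower l₁ l₂ l₃ p i + j = lower l₁ l₂ l₃ p (i + j) := by
  unfold icoord at h
  unfold lower
  split
  · rename_i hp
    rw [dif_pos hp] at h
    rw [tsub_add_eq_add_tsub]
    rw [Finsupp.single_le_iff]
    omega
  · rfl

lemma lower_comm (p q : Fin (l₁ + l₂ + l₃)) (i : Fin (l₁ + l₂) →₀ ℕ) :
    lower l₁ l₂ l₃ p (lower l₁ l₂ l₃ q i) = lower l₁ l₂ l₃ q (lower l₁ l₂ l₃ p i) := by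
  unfold lower
  split <;> split <;> try rfl
  rw [tsub_tsub, tsub_tsub]
  exact congrArg (i - ·) (add_comm _ _)

lemma smulmul (a b : F) (x y : Alg F l₁ l₂ l₃ Γ) : (a • x) * (b • y) = (a * b) • (x * y) := by
  rw [smul_mul_assoc, mul_smul_comm, smul_smul]

lemma single_eq (g : ↥Γ × (Fin (l₁ + l₂) →₀ ℕ)) (c : F) :
    (AddMonoidAlgebra.single g c : Alg F l₁ l₂ l₃ Γ) = c • mono F l₁ l₂ l₃ Γ g.1 g.2 := by
  unfold mono
  rw [AddMonoidAlgebra.smul_single', mul_one]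

lemma icoord_lower_of_ne (p q : Fin (l₁ + l₂ + l₃)) (hpq : p ≠ q) (i : Fin (l₁ + l₂) →₀ ℕ) :
    icoord l₁ l₂ l₃ p (lower l₁ l₂ l₃ q i) = icoord l₁ l₂ l₃ p i := by
  unfold icoord lower
  split
  · split
    · rw [Finsupp.tsub_apply, Finsupp.single_apply, if_neg, tsub_zero]
      intro h
      exact hpq.symm (Fin.ext (by simpa using congrArg Fin.val h))
    · rfl
  · rfl

lemma pd_comm (p q : Fin (l₁ + l₂ + l₃)) (a : Alg F l₁ l₂ l₃ Γ) :
    pd F l₁ l₂ l₃ Γ p (pd F l₁ l₂ l₃ Γ q a) = pd F l₁ l₂ l₃ Γ q (pd F l₁ l₂ l₃ Γ p a) := by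
  rcases eq_or_ne p q with rfl | hpq
  · rfl
  induction a using AddMonoidAlgebra.induction_linear with
  | zero => simp
  | add f g hf hg => simp [map_add, hf, hg]
  | single g c =>
      rw [single_eq, map_smul, map_smul, map_smul, map_smul]
      congr 1
      rw [pd_mono, pd_mono, map_add, map_add, map_smul, map_smul, map_smul, map_smul,
        pd_mono, pd_mono, pd_mono, pd_mono]
      rw [icoord_lower_of_ne p q hpq, icoord_lower_of_ne q p hpq.symm, lower_comm]
      module

lemma pd_mul (p : Fin (l₁ + l₂ + l₃)) (a b : Alg F l₁ l₂ l₃ Γ) :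
    pd F l₁ l₂ l₃ Γ p (a * b) =
      pd F l₁ l₂ l₃ Γ p a * b + a * pd F l₁ l₂ l₃ Γ p b := by
  induction a using AddMonoidAlgebra.induction_linear with
  | zero => simp
  | add f g hf hg => simp only [add_mul, map_add, hf, hg]; ring
  | single g c =>
    induction b using AddMonoidAlgebra.induction_linear with
    | zero => simp
    | add f g hf hg => simp only [mul_add, map_add, hf, hg]; ring
    | single g' c' =>
      rw [single_eq, single_eq, smulmul, mono_mul, map_smul, map_smul, map_smul,
        pd_mono, pd_mono, pd_mono, acoord_add]
      have key : ((icoord l₁ l₂ l₃ p (g.2 + g'.2) : F))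
            • mono F l₁ l₂ l₃ Γ (g.1 + g'.1) (lower l₁ l₂ l₃ p (g.2 + g'.2)) =
          (icoord l₁ l₂ l₃ p g.2 : F)
            • (mono F l₁ l₂ l₃ Γ g.1 (lower l₁ l₂ l₃ p g.2) * mono F l₁ l₂ l₃ Γ g'.1 g'.2)
          + (icoord l₁ l₂ l₃ p g'.2 : F)
            • (mono F l₁ l₂ l₃ Γ g.1 g.2 * mono F l₁ l₂ l₃ Γ g'.1 (lower l₁ l₂ l₃ p g'.2)) := by
        rw [icoord_add, Nat.cast_add, add_smul, mono_mul, mono_mul]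
        congr 1
        · rcases eq_or_ne (icoord l₁ l₂ l₃ p g.2) 0 with h | h
          · simp [h]
          · rw [lower_add_of_ne p _ _ h]
        · rcases eq_or_ne (icoord l₁ l₂ l₃ p g'.2) 0 with h | h
          · simp [h]
          · rw [add_comm g.2 (lower l₁ l₂ l₃ p g'.2), lower_add_of_ne p _ _ h]
            exact congrArg (fun e => ((icoord l₁ l₂ l₃ p g'.2 : F)
              • mono F l₁ l₂ l₃ Γ (g.1 + g'.1) (lower l₁ l₂ l₃ p e)))
              (add_comm g.2 g'.2)
      rw [key]
      simp only [smul_add, add_mul, mul_add, smul_mul_assoc, mul_smul_comm, smul_smul, mono_mul]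
      module

lemma pd_algebraMap (p : Fin (l₁ + l₂ + l₃)) (c : F) :
    pd F l₁ l₂ l₃ Γ p (algebraMap F (Alg F l₁ l₂ l₃ Γ) c) = 0 := by
  have h : (algebraMap F (Alg F l₁ l₂ l₃ Γ) c) = AddMonoidAlgebra.single (0 : ↥Γ × (Fin (l₁ + l₂) →₀ ℕ)) c := by
    rfl
  rw [h, single_eq, map_smul, pd_mono]
  have h1 : acoord F l₁ l₂ l₃ Γ p (0 : ↥Γ × (Fin (l₁ + l₂) →₀ ℕ)).1 = 0 := by
    unfold acoord; split <;> simp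
  have h2 : icoord l₁ l₂ l₃ p (0 : ↥Γ × (Fin (l₁ + l₂) →₀ ℕ)).2 = 0 := by
    unfold icoord; split <;> simp
  rw [h1, h2]
  simp

lemma actW_apply (μ : Fin (l₂ + l₃) → F) (X : Wt F l₁ l₂ l₃ Γ) (b : Alg F l₁ l₂ l₃ Γ) :
    actW F l₁ l₂ l₃ Γ μ X b =
      ∑ p, X p * (pd F l₁ l₂ l₃ Γ p b
        + algebraMap F (Alg F l₁ l₂ l₃ Γ) (fcoord F l₁ l₂ l₃ p μ) * b) := by
  simp [actW, Algebra.smul_def]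

lemma expand (μ : Fin (l₂ + l₃) → F) (X Y : Wt F l₁ l₂ l₃ Γ) (b : Alg F l₁ l₂ l₃ Γ) :
    actW F l₁ l₂ l₃ Γ μ X (actW F l₁ l₂ l₃ Γ μ Y b) =
      (∑ p, ∑ r, X p * pd F l₁ l₂ l₃ Γ p (Y r) * (pd F l₁ l₂ l₃ Γ r b
          + algebraMap F (Alg F l₁ l₂ l₃ Γ) (fcoord F l₁ l₂ l₃ r μ) * b))
      + ∑ p, ∑ r, X p * Y r *
          (pd F l₁ l₂ l₃ Γ p (pd F l₁ l₂ l₃ Γ r b)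
            + algebraMap F (Alg F l₁ l₂ l₃ Γ) (fcoord F l₁ l₂ l₃ r μ) * pd F l₁ l₂ l₃ Γ p b
            + algebraMap F (Alg F l₁ l₂ l₃ Γ) (fcoord F l₁ l₂ l₃ p μ) * pd F l₁ l₂ l₃ Γ r b
            + algebraMap F (Alg F l₁ l₂ l₃ Γ) (fcoord F l₁ l₂ l₃ p μ)
              * (algebraMap F (Alg F l₁ l₂ l₃ Γ) (fcoord F l₁ l₂ l₃ r μ) * b)) := by
  rw [actW_apply, actW_apply, ← Finset.sum_add_distrib]
  refine Finset.sum_congr rfl fun p _ => ?_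
  rw [← Finset.sum_add_distrib, map_sum, Finset.mul_sum, ← Finset.sum_add_distrib,
    Finset.mul_sum]
  refine Finset.sum_congr rfl fun r _ => ?_
  rw [pd_mul, map_add, pd_mul, pd_algebraMap, zero_mul, zero_add]
  ring

lemma act_br (μ : Fin (l₂ + l₃) → F) (X Y : Wt F l₁ l₂ l₃ Γ) :
    actW F l₁ l₂ l₃ Γ μ (wbr F l₁ l₂ l₃ Γ X Y) =
      actW F l₁ l₂ l₃ Γ μ X ∘ₗ actW F l₁ l₂ l₃ Γ μ Y
        - actW F l₁ l₂ l₃ Γ μ Y ∘ₗ actW F l₁ l₂ l₃ Γ μ X := by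
  apply LinearMap.ext
  intro b
  rw [LinearMap.sub_apply, LinearMap.comp_apply, LinearMap.comp_apply, expand, expand]
  have hsym : (∑ p, ∑ r, Y p * X r *
          (pd F l₁ l₂ l₃ Γ p (pd F l₁ l₂ l₃ Γ r b)
            + algebraMap F (Alg F l₁ l₂ l₃ Γ) (fcoord F l₁ l₂ l₃ r μ) * pd F l₁ l₂ l₃ Γ p b
            + algebraMap F (Alg F l₁ l₂ l₃ Γ) (fcoord F l₁ l₂ l₃ p μ) * pd F l₁ l₂ l₃ Γ r b
            + algebraMap F (Alg F l₁ l₂ l₃ Γ) (fcoord F l₁ l₂ l₃ p μ)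
              * (algebraMap F (Alg F l₁ l₂ l₃ Γ) (fcoord F l₁ l₂ l₃ r μ) * b)))
      = ∑ p, ∑ r, X p * Y r *
          (pd F l₁ l₂ l₃ Γ p (pd F l₁ l₂ l₃ Γ r b)
            + algebraMap F (Alg F l₁ l₂ l₃ Γ) (fcoord F l₁ l₂ l₃ r μ) * pd F l₁ l₂ l₃ Γ p b
            + algebraMap F (Alg F l₁ l₂ l₃ Γ) (fcoord F l₁ l₂ l₃ p μ) * pd F l₁ l₂ l₃ Γ r b
            + algebraMap F (Alg F l₁ l₂ l₃ Γ) (fcoord F l₁ l₂ l₃ p μ)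
              * (algebraMap F (Alg F l₁ l₂ l₃ Γ) (fcoord F l₁ l₂ l₃ r μ) * b)) := by
    rw [Finset.sum_comm]
    refine Finset.sum_congr rfl fun p _ => Finset.sum_congr rfl fun r _ => ?_
    rw [pd_comm]
    ring
  rw [hsym]
  have h1 : actW F l₁ l₂ l₃ Γ μ (wbr F l₁ l₂ l₃ Γ X Y) b
      = (∑ p, ∑ r, X p * pd F l₁ l₂ l₃ Γ p (Y r) * (pd F l₁ l₂ l₃ Γ r b
          + algebraMap F (Alg F l₁ l₂ l₃ Γ) (fcoord F l₁ l₂ l₃ r μ) * b))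
        - ∑ p, ∑ r, Y p * pd F l₁ l₂ l₃ Γ p (X r) * (pd F l₁ l₂ l₃ Γ r b
          + algebraMap F (Alg F l₁ l₂ l₃ Γ) (fcoord F l₁ l₂ l₃ r μ) * b) := by
    rw [actW_apply]
    unfold wbr
    simp only [Finset.sum_mul, sub_mul, Finset.sum_sub_distrib]
    exact congrArg₂ (· - ·) Finset.sum_comm Finset.sum_comm
  rw [h1]
  abel

lemma sum_single_mul (a : Fin (l₁ + l₂ + l₃)) (x : Alg F l₁ l₂ l₃ Γ)
    (f : Fin (l₁ + l₂ + l₃) → Alg F l₁ l₂ l₃ Γ) :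
    ∑ r, (Pi.single a x : Fin (l₁ + l₂ + l₃) → Alg F l₁ l₂ l₃ Γ) r * f r = x * f a := by
  rw [Finset.sum_eq_single a (fun r _ hr => by rw [Pi.single_eq_of_ne hr, zero_mul])
    (fun h => absurd (Finset.mem_univ a) h), Pi.single_eq_same]

lemma lower_addl (p : Fin (l₁ + l₂ + l₃)) (i j : Fin (l₁ + l₂) →₀ ℕ)
    (h : icoord l₁ l₂ l₃ p i ≠ 0) :
    lower l₁ l₂ l₃ p i + j = lower l₁ l₂ l₃ p (i + j) :=
  lower_add_of_ne p i j h

lemma lower_addr (p : Fin (l₁ + l₂ + l₃)) (i j : Fin (l₁ + l₂) →₀ ℕ)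
    (h : icoord l₁ l₂ l₃ p j ≠ 0) :
    i + lower l₁ l₂ l₃ p j = lower l₁ l₂ l₃ p (i + j) := by
  rw [add_comm i (lower l₁ l₂ l₃ p j), lower_add_of_ne p j i h]
  exact congrArg (lower l₁ l₂ l₃ p) (add_comm j i)

lemma act_Dpq (μ : Fin (l₂ + l₃) → F) (p q : Fin (l₁ + l₂ + l₃)) (hpq : p ≠ q)
    (α β : Γ) (i j : Fin (l₁ + l₂) →₀ ℕ) :
    actW F l₁ l₂ l₃ Γ μ (Dpq F l₁ l₂ l₃ Γ p q (mono F l₁ l₂ l₃ Γ α i))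
        (mono F l₁ l₂ l₃ Γ β j) =
          (acoord F l₁ l₂ l₃ Γ p α * (acoord F l₁ l₂ l₃ Γ q β + fcoord F l₁ l₂ l₃ q μ)
              - acoord F l₁ l₂ l₃ Γ q α *
                  (acoord F l₁ l₂ l₃ Γ p β + fcoord F l₁ l₂ l₃ p μ)) •
            mono F l₁ l₂ l₃ Γ (β + α) (i + j)
          + ((icoord l₁ l₂ l₃ q j : F) * acoord F l₁ l₂ l₃ Γ p α
              - (icoord l₁ l₂ l₃ q i : F) *
                  (acoord F l₁ l₂ l₃ Γ p β + fcoord F l₁ l₂ l₃ p μ)) •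
            mono F l₁ l₂ l₃ Γ (β + α) (lower l₁ l₂ l₃ q (i + j))
          + ((icoord l₁ l₂ l₃ p i : F) *
                  (acoord F l₁ l₂ l₃ Γ q β + fcoord F l₁ l₂ l₃ q μ)
              - (icoord l₁ l₂ l₃ p j : F) * acoord F l₁ l₂ l₃ Γ q α) •
            mono F l₁ l₂ l₃ Γ (β + α) (lower l₁ l₂ l₃ p (i + j))
          + ((icoord l₁ l₂ l₃ p i * icoord l₁ l₂ l₃ q j : F)
              - (icoord l₁ l₂ l₃ q i * icoord l₁ l₂ l₃ p j : F)) •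
            mono F l₁ l₂ l₃ Γ (β + α) (lower l₁ l₂ l₃ p (lower l₁ l₂ l₃ q (i + j))) := by
  rw [actW_apply]
  unfold Dpq
  simp only [Pi.sub_apply, sub_mul, Finset.sum_sub_distrib]
  rw [sum_single_mul, sum_single_mul, ← Algebra.smul_def, ← Algebra.smul_def,
    pd_mono, pd_mono, pd_mono, pd_mono, add_comm β α]
  simp only [mul_add, add_mul, smulmul, mono_mul]
  rcases eq_or_ne (icoord l₁ l₂ l₃ p i) 0 with h1 | h1 <;>
  rcases eq_or_ne (icoord l₁ l₂ l₃ q i) 0 with h2 | h2 <;>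
  rcases eq_or_ne (icoord l₁ l₂ l₃ p j) 0 with h3 | h3 <;>
  rcases eq_or_ne (icoord l₁ l₂ l₃ q j) 0 with h4 | h4 <;>
  · simp only [h1, h2, h3, h4, lower_addl, lower_addr, lower_comm, Nat.cast_zero, zero_mul,
      mul_zero, zero_smul, smul_zero, add_zero, zero_add, ne_eq, not_false_iff, Nat.cast_mul]
    module

noncomputable def Phi (μ : Fin (l₂ + l₃) → F) :
    Wt F l₁ l₂ l₃ Γ →ₗ[F] (Alg F l₁ l₂ l₃ Γ →ₗ[F] Alg F l₁ l₂ l₃ Γ) where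
  toFun X := actW F l₁ l₂ l₃ Γ μ X
  map_add' X Y := by
    apply LinearMap.ext
    intro b
    simp only [actW_apply, LinearMap.add_apply, Pi.add_apply, add_mul,
      Finset.sum_add_distrib]
  map_smul' c X := by
    apply LinearMap.ext
    intro b
    simp only [actW_apply, LinearMap.smul_apply, Pi.smul_apply, smul_mul_assoc,
      Finset.smul_sum, RingHom.id_apply]

/-- The defining formulas of `A_μ` give a module structure over the Lie algebra
`S(l₁,l₂,l₃;0,Γ)` on the space with basis `{v_{α,i} : α ∈ Γ, i ∈ ℕ^{l₁+l₂}}` (realized as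
`A` with `v_{β,j} = x^β t^j`): there is a linear map `ρ` on `S` whose value on
`D_{p,q}(x^α t^i)` is given by the formula of Theorem 1.1, and which satisfies
`ρ[X,Y] = ρX ∘ ρY − ρY ∘ ρX` for all `X, Y ∈ S`. -/
theorem stmt8 [IsAlgClosed F] [CharZero F]
    (h12 : 3 ≤ l₁ + l₂) (h23 : 3 ≤ l₂ + l₃) (hΓ : Nondeg F l₂ l₃ Γ)
    (μ : Fin (l₂ + l₃) → F) :
    ∃ ρ : ↥(Ssub F l₁ l₂ l₃ Γ) →ₗ[F] (Alg F l₁ l₂ l₃ Γ →ₗ[F] Alg F l₁ l₂ l₃ Γ),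
      (∀ (p q : Fin (l₁ + l₂ + l₃)) (α β : Γ) (i j : Fin (l₁ + l₂) →₀ ℕ)
          (h : Dpq F l₁ l₂ l₃ Γ p q (mono F l₁ l₂ l₃ Γ α i) ∈ Ssub F l₁ l₂ l₃ Γ), p ≠ q →
        ρ ⟨Dpq F l₁ l₂ l₃ Γ p q (mono F l₁ l₂ l₃ Γ α i), h⟩ (mono F l₁ l₂ l₃ Γ β j) =
          (acoord F l₁ l₂ l₃ Γ p α * (acoord F l₁ l₂ l₃ Γ q β + fcoord F l₁ l₂ l₃ q μ)
              - acoord F l₁ l₂ l₃ Γ q α *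
                  (acoord F l₁ l₂ l₃ Γ p β + fcoord F l₁ l₂ l₃ p μ)) •
            mono F l₁ l₂ l₃ Γ (β + α) (i + j)
          + ((icoord l₁ l₂ l₃ q j : F) * acoord F l₁ l₂ l₃ Γ p α
              - (icoord l₁ l₂ l₃ q i : F) *
                  (acoord F l₁ l₂ l₃ Γ p β + fcoord F l₁ l₂ l₃ p μ)) •
            mono F l₁ l₂ l₃ Γ (β + α) (lower l₁ l₂ l₃ q (i + j))
          + ((icoord l₁ l₂ l₃ p i : F) *
                  (acoord F l₁ l₂ l₃ Γ q β + fcoord F l₁ l₂ l₃ q μ)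
              - (icoord l₁ l₂ l₃ p j : F) * acoord F l₁ l₂ l₃ Γ q α) •
            mono F l₁ l₂ l₃ Γ (β + α) (lower l₁ l₂ l₃ p (i + j))
          + ((icoord l₁ l₂ l₃ p i * icoord l₁ l₂ l₃ q j : F)
              - (icoord l₁ l₂ l₃ q i * icoord l₁ l₂ l₃ p j : F)) •
            mono F l₁ l₂ l₃ Γ (β + α) (lower l₁ l₂ l₃ p (lower l₁ l₂ l₃ q (i + j)))) ∧
      (∀ (X Y : Wt F l₁ l₂ l₃ Γ) (hX : X ∈ Ssub F l₁ l₂ l₃ Γ) (hY : Y ∈ Ssub F l₁ l₂ l₃ Γ)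
          (hXY : wbr F l₁ l₂ l₃ Γ X Y ∈ Ssub F l₁ l₂ l₃ Γ),
        ρ ⟨wbr F l₁ l₂ l₃ Γ X Y, hXY⟩ =
          ρ ⟨X, hX⟩ ∘ₗ ρ ⟨Y, hY⟩ - ρ ⟨Y, hY⟩ ∘ₗ ρ ⟨X, hX⟩) := by
  refine ⟨(Phi μ).comp (Ssub F l₁ l₂ l₃ Γ).subtype, ?_, ?_⟩
  · intro p q α β i j h hpq
    simp only [LinearMap.comp_apply, Submodule.subtype_apply, Phi, LinearMap.coe_mk,
      AddHom.coe_mk]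
    exact act_Dpq μ p q hpq α β i j
  · intro X Y hX hY hXY
    simp only [LinearMap.comp_apply, Submodule.subtype_apply, Phi, LinearMap.coe_mk,
      AddHom.coe_mk]
    exact act_br μ X Y


end SDF
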